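/- For every integer m ≥ 1, the family of products ξ̃_{i_1} ξ̃_{i_2} ⋯ ξ̃_{i_k} in Λ, indexed by all k ≥ 0 and all sequences 0 ≤ i_1 < i_2 < … < i_k with i_{α+1} − i_α ≥ 2m for all α (the empty product 1 included), is ℂ-linearly independent. -/

import Mathlib

/-- `ξ̃_n = Σ_{β_1+⋯+β_{2m} = n} e_{(1,β_1)} ∧ e_{(2,β_2)} ∧ ⋯ ∧ e_{(2m,β_{2m})}`
in the exterior algebra of the free ℂ-vector space on `Fin (2m) × ℕ`. -/
noncomputable def xitilde (m n : ℕ) : ExteriorAlgebra ℂ ((Fin (2 * m) × ℕ) →₀ ℂ) :=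
  ∑ β ∈ (Fintype.piFinset fun _ : Fin (2 * m) => Finset.range (n + 1)).filter
      (fun β => ∑ s, β s = n),
    ((List.finRange (2 * m)).map
      (fun s => ExteriorAlgebra.ι ℂ (Finsupp.single (s, β s) (1 : ℂ)))).prod

/-- A finite set of indices is admissible if any two distinct elements differ by at
least `2m`; these index the products `ξ̃_{i_1}⋯ξ̃_{i_k}` with `i_{α+1} - i_α ≥ 2m`. -/
def Adm (m : ℕ) (S : Finset ℕ) : Prop :=
  ∀ a ∈ S, ∀ b ∈ S, a ≠ b → (2 * m : ℤ) ≤ |(a : ℤ) - (b : ℤ)|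

namespace S5

/-- the balanced choice: `fcol m s i = i/(2m) + [s < i mod 2m]`. -/
def fcol (m : ℕ) (s : Fin (2*m)) (i : ℕ) : ℕ :=
  i / (2*m) + if (s:ℕ) < i % (2*m) then 1 else 0

lemma card_filter_lt (n r : ℕ) (h : r < n) :
    (Finset.univ.filter fun s : Fin n => (s:ℕ) < r).card = r := by
  have : (Finset.univ.filter fun s : Fin n => (s:ℕ) < r) = Finset.Iio ⟨r, h⟩ := by
    ext s; simp [Fin.lt_def]
  rw [this, Fin.card_Iio]

lemma sum_fcol {m : ℕ} (hm : 1 ≤ m) (i : ℕ) : ∑ s : Fin (2*m), fcol m s i = i := by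
  have hc : 0 < 2*m := by omega
  unfold fcol
  rw [Finset.sum_add_distrib, Finset.sum_const, ← Finset.card_filter,
    card_filter_lt _ _ (Nat.mod_lt _ hc)]
  have := Nat.div_add_mod i (2*m)
  simp only [Finset.card_univ, Fintype.card_fin, smul_eq_mul]
  omega

lemma fcol_mono {m : ℕ} (s : Fin (2*m)) {i i' : ℕ} (h : i ≤ i') :
    fcol m s i ≤ fcol m s i' := by
  have hq : i / (2*m) ≤ i' / (2*m) := Nat.div_le_div_right h
  rcases eq_or_lt_of_le hq with he | hlt
  · have h1 := Nat.div_add_mod i (2*m)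
    have h2 := Nat.div_add_mod i' (2*m)
    have h3 : 2*m * (i'/(2*m)) = 2*m * (i/(2*m)) := by rw [he]
    unfold fcol; split_ifs with h4 h5 <;> omega
  · unfold fcol; split_ifs with h4 h5 <;> omega

lemma fcol_gap {m : ℕ} (hm : 1 ≤ m) (s : Fin (2*m)) {i i' : ℕ} (h : i + 2*m ≤ i') :
    fcol m s i < fcol m s i' := by
  have hc : 0 < 2*m := by omega
  have hq : i / (2*m) + 1 ≤ i' / (2*m) := by
    have h0 : (i + 2*m) / (2*m) = i / (2*m) + 1 := Nat.add_div_right _ hc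
    calc i/(2*m) + 1 = (i+2*m)/(2*m) := h0.symm
      _ ≤ i'/(2*m) := Nat.div_le_div_right h
  rcases eq_or_lt_of_le hq with he | hlt
  · have h1 := Nat.div_add_mod i (2*m)
    have h2 := Nat.div_add_mod i' (2*m)
    have h3 : 2*m * (i'/(2*m)) = 2*m * (i/(2*m)) + 2*m := by rw [← he]; ring
    unfold fcol; split_ifs with h4 h5 <;> omega
  · unfold fcol; split_ifs with h4 h5 <;> omega

lemma fcol_le {m : ℕ} (hm : 1 ≤ m) (s : Fin (2*m)) (i : ℕ) : fcol m s i ≤ i := by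
  have h1 := Nat.div_add_mod i (2*m)
  have h2 : i/(2*m) ≤ 2*m * (i/(2*m)) := Nat.le_mul_of_pos_left _ (by omega)
  unfold fcol; split_ifs with h4 <;> omega


lemma Adm_gap {m : ℕ} {S : Finset ℕ} (h : Adm m S) {a b : ℕ} (ha : a ∈ S) (hb : b ∈ S)
    (hab : a < b) : a + 2*m ≤ b := by
  have h1 := h a ha b hb (by omega)
  have h2 : |(a:ℤ) - b| = (b:ℤ) - a := by rw [abs_of_nonpos (by omega), neg_sub]
  omega

lemma two_pow_sum (n : ℕ) : ∑ j ∈ Finset.range n, 2^j = 2^n - 1 := by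
  induction n with
  | zero => simp
  | succ n ih =>
    have : 0 < 2^n := Nat.pow_pos (by omega)
    rw [Finset.sum_range_succ, ih]; ring_nf; omega

lemma pow2_sum_lt {k : ℕ} (u : Fin k → ℕ) (hu : StrictMono u) (M : ℕ)
    (hM : ∀ α, u α < M) : ∑ α, 2^(u α) < 2^M := by
  have h1 : ∑ α, 2^(u α) = ∑ j ∈ Finset.univ.image u, 2^j :=
    (Finset.sum_image (fun a _ b _ h => hu.injective h)).symm
  have h2 : Finset.univ.image u ⊆ Finset.range M := by
    intro j hj
    obtain ⟨α, _, rfl⟩ := Finset.mem_image.mp hj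
    exact Finset.mem_range.mpr (hM α)
  calc ∑ α, 2^(u α) ≤ ∑ j ∈ Finset.range M, 2^j := by
        rw [h1]; exact Finset.sum_le_sum_of_subset h2
    _ = 2^M - 1 := two_pow_sum M
    _ < 2^M := by have : 0 < 2^M := Nat.pow_pos (by omega); omega

lemma sum_singleton_multiset {γ : Type*} {n : ℕ} (g : Fin n → γ) :
    ∑ α : Fin n, ({g α} : Multiset γ) = Finset.univ.val.map g := by
  rw [Finset.sum_eq_multiset_sum]
  rw [show (fun α => ({g α} : Multiset γ)) = (fun a => ({a} : Multiset γ)) ∘ g from rfl,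
    ← Multiset.map_map, Multiset.sum_map_singleton]

lemma univ_val_map_castSucc {γ : Type*} (k : ℕ) (g : Fin (k+1) → γ) :
    (Finset.univ.val.map g : Multiset γ)
      = g (Fin.last k) ::ₘ Finset.univ.val.map (fun a : Fin k => g a.castSucc) := by
  rw [← sum_singleton_multiset, ← sum_singleton_multiset, Fin.sum_univ_castSucc,
    ← Multiset.singleton_add, add_comm]

lemma key {m : ℕ} (hm : 1 ≤ m) :
    ∀ (k : ℕ) (S : Finset ℕ), Adm m S → S.card = k →
    ∀ u : Fin k → ℕ, StrictMono u →
    ∀ β : Fin k → Fin (2*m) → ℕ,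
      (∀ α, ∑ s, β α s = u α) →
      (∀ s, (Finset.univ.val.map fun α => β α s) = S.val.map (fcol m s)) →
      (∑ α, 2^(u α) ≤ ∑ i ∈ S, 2^i) ∧
      (∑ α, 2^(u α) = ∑ i ∈ S, 2^i →
        (∀ α, u α ∈ S) ∧ ∀ α s, β α s = fcol m s (u α)) := by
  intro k
  induction k with
  | zero =>
    intro S _ hcard u _ β _ _
    rw [Finset.card_eq_zero.mp hcard]
    simp only [Finset.univ_eq_empty, Finset.sum_empty]
    exact ⟨le_rfl, fun _ => ⟨fun α => α.elim0, fun α => α.elim0⟩⟩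
  | succ k IH =>
    intro S hAdm hcard u hu β hsum hms
    have hne : S.Nonempty := Finset.card_pos.mp (by omega)
    set M := S.max' hne with hMdef
    have hMS : M ∈ S := S.max'_mem hne
    have h1 : ∀ α s, β α s ≤ fcol m s M := by
      intro α s
      have hmem : β α s ∈ Finset.univ.val.map (fun α => β α s) :=
        Multiset.mem_map_of_mem _ (by simp [Finset.mem_val])
      rw [hms s] at hmem
      obtain ⟨i, hi, hEq⟩ := Multiset.mem_map.mp hmem
      rw [← hEq]
      exact fcol_mono s (S.le_max' i hi)
    have h2 : ∀ α, u α ≤ M := by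
      intro α
      rw [← hsum α]
      calc ∑ s, β α s ≤ ∑ s, fcol m s M := Finset.sum_le_sum (fun s _ => h1 α s)
        _ = M := sum_fcol hm M
    have hsingle : 2^M ≤ ∑ i ∈ S, 2^i :=
      Finset.single_le_sum (f := fun i => 2^i) (fun i _ => Nat.zero_le _) hMS
    by_cases hcase : u (Fin.last k) = M
    · -- top matches
      have h3 : ∀ s, β (Fin.last k) s = fcol m s M := by
        have he : ∑ s, β (Fin.last k) s = ∑ s, fcol m s M := by
          rw [hsum, hcase, sum_fcol hm]
        intro s
        exact (Finset.sum_eq_sum_iff_of_le (fun s _ => h1 (Fin.last k) s)).mp he s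
          (Finset.mem_univ s)
      set S' := S.erase M with hS'def
      have hA' : Adm m S' := fun a ha b hb hab =>
        hAdm a (Finset.mem_of_mem_erase ha) b (Finset.mem_of_mem_erase hb) hab
      have hcard' : S'.card = k := by
        rw [hS'def, Finset.card_erase_of_mem hMS, hcard]; omega
      have hu' : StrictMono (fun α : Fin k => u α.castSucc) :=
        fun a b hab => hu (Fin.castSucc_lt_castSucc_iff.mpr hab)
      have hms' : ∀ s, (Finset.univ.val.map fun α : Fin k => β α.castSucc s)
          = S'.val.map (fcol m s) := by
        intro s
        have hh := hms s
        rw [univ_val_map_castSucc k (fun α => β α s)] at hh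
        have hSv : S.val.map (fcol m s) = fcol m s M ::ₘ S'.val.map (fcol m s) := by
          rw [hS'def, Finset.erase_val, ← Multiset.map_cons, Multiset.cons_erase hMS]
        rw [hSv, h3 s] at hh
        exact (Multiset.cons_inj_right _).mp hh
      obtain ⟨hle', heq'⟩ := IH S' hA' hcard' _ hu' _ (fun α => hsum α.castSucc) hms'
      have hsplit_u : ∑ α : Fin (k+1), 2^(u α)
          = (∑ α : Fin k, 2^(u α.castSucc)) + 2^M := by
        rw [Fin.sum_univ_castSucc, hcase]
      have hsplit_S : ∑ i ∈ S, 2^i = (∑ i ∈ S', 2^i) + 2^M := by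
        rw [hS'def, Finset.sum_erase_add S _ hMS]
      constructor
      · omega
      · intro heq
        obtain ⟨hmem', hβ'⟩ := heq' (by omega)
        constructor
        · intro α
          refine Fin.lastCases ?_ ?_ α
          · rw [hcase]; exact hMS
          · exact fun γ => Finset.mem_of_mem_erase (hmem' γ)
        · intro α
          refine Fin.lastCases ?_ ?_ α
          · intro s; rw [hcase]; exact h3 s
          · exact fun γ => hβ' γ
    · -- strict drop
      have hlast : u (Fin.last k) < M := lt_of_le_of_ne (h2 _) hcase
      have hall : ∀ α, u α < M := fun α =>
        lt_of_le_of_lt (hu.monotone (Fin.le_last α)) hlast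
      have hlt : ∑ α, 2^(u α) < ∑ i ∈ S, 2^i :=
        lt_of_lt_of_le (pow2_sum_lt u hu M hall) hsingle
      exact ⟨le_of_lt hlt, fun heq => absurd heq (by omega)⟩


noncomputable def gen (m : ℕ) (y : Fin (2*m) × ℕ) : ExteriorAlgebra ℂ ((Fin (2*m) × ℕ) →₀ ℂ) :=
  ExteriorAlgebra.ι ℂ (Finsupp.single y 1)

def blockL (m : ℕ) (b : Fin (2*m) → ℕ) : List (Fin (2*m) × ℕ) :=
  (List.finRange (2*m)).map fun s => (s, b s)

def YL (m : ℕ) {k : ℕ} (β : Fin k → Fin (2*m) → ℕ) : List (Fin (2*m) × ℕ) :=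
  (List.finRange k).flatMap fun α => blockL m (β α)

noncomputable def wedge (m : ℕ) (Y : List (Fin (2*m) × ℕ)) :
    ExteriorAlgebra ℂ ((Fin (2*m) × ℕ) →₀ ℂ) :=
  (Y.map (gen m)).prod

def Bset (m i : ℕ) : Finset (Fin (2*m) → ℕ) :=
  (Fintype.piFinset fun _ : Fin (2 * m) => Finset.range (i + 1)).filter (fun β => ∑ s, β s = i)

lemma xitilde_eq (m i : ℕ) : xitilde m i = ∑ b ∈ Bset m i, wedge m (blockL m b) := by
  unfold xitilde Bset wedge blockL
  congr 1
  ext b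
  rw [List.map_map]
  rfl

lemma length_blockL (m : ℕ) (b : Fin (2*m) → ℕ) : (blockL m b).length = 2*m := by
  simp [blockL]

lemma length_YL (m : ℕ) {k : ℕ} (β : Fin k → Fin (2*m) → ℕ) :
    (YL m β).length = k * (2*m) := by
  simp only [YL]
  rw [List.length_flatMap]
  have h : (List.finRange k).map (fun α => (blockL m (β α)).length)
      = List.replicate k (2*m) := by
    apply List.eq_replicate_iff.mpr
    constructor
    · simp
    · intro x hx
      obtain ⟨α, _, rfl⟩ := List.mem_map.mp hx
      exact length_blockL m (β α)
  show (List.map (fun α => (blockL m (β α)).length) (List.finRange k)).sum = k * (2*m)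
  rw [h, List.sum_replicate, smul_eq_mul]

lemma wedge_YL (m : ℕ) {k : ℕ} (β : Fin k → Fin (2*m) → ℕ) :
    wedge m (YL m β) = ((List.finRange k).map fun α => wedge m (blockL m (β α))).prod := by
  unfold wedge YL
  rw [List.map_flatMap, List.flatMap_def, List.prod_flatten, List.map_map]
  rfl

lemma expand (m : ℕ) : ∀ (k : ℕ) (u : Fin k → ℕ),
    ((List.ofFn u).map (xitilde m)).prod
      = ∑ β ∈ Fintype.piFinset (fun α : Fin k => Bset m (u α)), wedge m (YL m β) := by
  intro k
  induction k with
  | zero =>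
    intro u
    have hsingle : Fintype.piFinset (fun α : Fin 0 => Bset m (u α)) = {fun α => α.elim0} := by
      apply Finset.eq_singleton_iff_unique_mem.mpr
      exact ⟨by rw [Fintype.mem_piFinset]; exact fun α => α.elim0,
        fun b _ => Subsingleton.elim _ _⟩
    rw [hsingle, Finset.sum_singleton]
    simp [wedge, YL, List.finRange_zero]
  | succ k ih =>
    intro u
    rw [List.ofFn_succ, List.map_cons, List.prod_cons, ih, xitilde_eq, Finset.sum_mul_sum,
      ← Finset.sum_product']
    refine Finset.sum_nbij' (fun p => Fin.cons p.1 p.2) (fun γ => (γ 0, fun α => γ α.succ))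
      ?_ ?_ ?_ ?_ ?_
    · intro p hp
      rw [Finset.mem_product] at hp
      rw [Fintype.mem_piFinset]
      intro α
      refine Fin.cases ?_ ?_ α
      · exact hp.1
      · intro γ
        have := Fintype.mem_piFinset.mp hp.2 γ
        simpa using this
    · intro γ hγ
      rw [Fintype.mem_piFinset] at hγ
      rw [Finset.mem_product]
      refine ⟨hγ 0, ?_⟩
      rw [Fintype.mem_piFinset]
      intro α
      simpa using hγ α.succ
    · intro p _
      simp
    · intro γ _
      funext α
      exact Fin.cases rfl (fun _ => rfl) α
    · intro p hp
      rw [wedge_YL, wedge_YL, List.finRange_succ, List.map_cons, List.prod_cons,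
        List.map_map]
      simp [Function.comp_def]

noncomputable def detA (m : ℕ) (X : List (Fin (2*m) × ℕ)) :
    ((Fin (2*m) × ℕ) →₀ ℂ) [⋀^Fin X.length]→ₗ[ℂ] ℂ :=
  (Matrix.detRowAlternating).compLinearMap (LinearMap.pi fun a => Finsupp.lapply (X.get a))

noncomputable def phi (m : ℕ) (X : List (Fin (2*m) × ℕ)) :
    ExteriorAlgebra ℂ ((Fin (2*m) × ℕ) →₀ ℂ) →ₗ[ℂ] ℂ :=
  ExteriorAlgebra.liftAlternating fun n =>
    if h : n = X.length then (detA m X).domDomCongr (finCongr h.symm) else 0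

lemma wedge_eq_iMulti (m : ℕ) {n : ℕ} (v : Fin n → Fin (2*m) × ℕ) :
    wedge m (List.ofFn v)
      = ExteriorAlgebra.ιMulti ℂ n (fun b => Finsupp.single (v b) (1:ℂ)) := by
  rw [ExteriorAlgebra.ιMulti_apply]
  unfold wedge gen
  rw [List.map_ofFn]
  rfl

lemma phi_ofFn_ne (m : ℕ) (X : List (Fin (2*m) × ℕ)) {n : ℕ} (v : Fin n → Fin (2*m) × ℕ)
    (h : n ≠ X.length) : phi m X (wedge m (List.ofFn v)) = 0 := by
  rw [wedge_eq_iMulti, phi, ExteriorAlgebra.liftAlternating_apply_ιMulti, dif_neg h]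
  rfl

lemma phi_ofFn (m : ℕ) (X : List (Fin (2*m) × ℕ)) (v : Fin X.length → Fin (2*m) × ℕ) :
    phi m X (wedge m (List.ofFn v))
      = (Matrix.of fun b a : Fin X.length =>
          if v b = X.get a then (1:ℂ) else 0).det := by
  rw [wedge_eq_iMulti, phi, ExteriorAlgebra.liftAlternating_apply_ιMulti, dif_pos rfl,
    finCongr_refl, AlternatingMap.domDomCongr_refl, detA, AlternatingMap.compLinearMap_apply]
  show Matrix.detRowAlternating _ = _
  unfold Matrix.detRowAlternating
  congr 1
  ext b a
  simp [Matrix.of_apply, Finsupp.single_apply]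

lemma list_eq_ofFn {γ : Type*} {Y : List γ} {n : ℕ} (h : Y.length = n) :
    Y = List.ofFn (fun b : Fin n => Y.get (Fin.cast h.symm b)) := by
  subst h
  exact (List.ofFn_get Y).symm

lemma phi_wedge_ne (m : ℕ) (X Y : List (Fin (2*m) × ℕ)) (h : Y.length ≠ X.length) :
    phi m X (wedge m Y) = 0 := by
  rw [list_eq_ofFn (rfl : Y.length = Y.length)]
  exact phi_ofFn_ne m X _ h

lemma phi_wedge_nonperm (m : ℕ) (X Y : List (Fin (2*m) × ℕ)) (hX : X.Nodup)
    (h : Y.length = X.length) (hnp : ¬ Y.Perm X) : phi m X (wedge m Y) = 0 := by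
  set v : Fin X.length → Fin (2*m) × ℕ := fun b => Y.get (Fin.cast h.symm b) with hv
  rw [list_eq_ofFn h, phi_ofFn]
  by_cases hdup : Y.Nodup
  · have hsub : ¬ ∀ y ∈ Y, y ∈ X := by
      intro hsub
      exact hnp ((hdup.subperm hsub).perm_of_length_le h.ge)
    push_neg at hsub
    obtain ⟨y, hyY, hyX⟩ := hsub
    obtain ⟨b, hb⟩ := List.mem_iff_get.mp hyY
    apply Matrix.det_eq_zero_of_row_eq_zero (Fin.cast h b)
    intro a
    have hvb : (Y.get (Fin.cast h.symm (Fin.cast h b))) = y := hb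
    simp only [Matrix.of_apply]
    rw [hvb, if_neg]
    intro hEq
    exact hyX (hEq ▸ X.get_mem a)
  · rw [List.nodup_iff_injective_get] at hdup
    rw [Function.not_injective_iff] at hdup
    obtain ⟨b, b', hbb', hne⟩ := hdup
    apply Matrix.det_zero_of_row_eq (i := Fin.cast h b) (j := Fin.cast h b')
    · intro hEq
      apply hne
      have := congrArg (Fin.cast h.symm) hEq
      simpa using this
    · funext a
      simp only [Matrix.of_apply]
      have hcc : v (Fin.cast h b) = v (Fin.cast h b') := hbb'
      rw [show Y.get (Fin.cast h.symm (Fin.cast h b)) = Y.get (Fin.cast h.symm (Fin.cast h b'))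
        from hbb']

lemma phi_self (m : ℕ) (X : List (Fin (2*m) × ℕ)) (hX : X.Nodup) :
    phi m X (wedge m X) = 1 := by
  have h0 : wedge m X = wedge m (List.ofFn (fun b : Fin X.length => X.get b)) := by
    rw [List.ofFn_get]
  rw [h0, phi_ofFn]
  have hinj := List.nodup_iff_injective_get.mp hX
  have : (Matrix.of fun b a : Fin X.length =>
      if X.get b = X.get a then (1:ℂ) else 0) = 1 := by
    ext b a
    simp only [Matrix.of_apply, Matrix.one_apply]
    congr 1
    simp only [eq_iff_iff]
    constructor
    · intro hh
      exact hinj hh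
    · rintro rfl
      rfl
  rw [this, Matrix.det_one]

def can (m i : ℕ) : Fin (2*m) → ℕ := fun s => fcol m s i

lemma coe_flatMap {γ δ : Type*} (l : List γ) (f : γ → List δ) :
    ((l.flatMap f : List δ) : Multiset δ)
      = ((l.map fun a => ((f a : List δ) : Multiset δ)).sum) := by
  induction l with
  | nil => simp
  | cons a l ih =>
    rw [List.flatMap_cons, List.map_cons, List.sum_cons, ← ih]
    exact (Multiset.coe_add _ _).symm ▸ rfl

lemma YL_multiset (m : ℕ) {k : ℕ} (β : Fin k → Fin (2*m) → ℕ) :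
    ((YL m β : List _) : Multiset (Fin (2*m) × ℕ))
      = ∑ α : Fin k, ((blockL m (β α) : List _) : Multiset _) := by
  rw [YL, coe_flatMap, Fin.sum_univ_def]

lemma count_map_univ {γ : Type*} [DecidableEq γ] {k : ℕ} (g : Fin k → γ) (j : γ) :
    Multiset.count j (Finset.univ.val.map g)
      = (Finset.univ.filter fun α => g α = j).card := by
  rw [Multiset.count_map, Finset.card_def, Finset.filter_val]
  congr 1
  exact Multiset.filter_congr (fun x _ => eq_comm)

lemma count_blockL (m : ℕ) (b : Fin (2*m) → ℕ) (p : Fin (2*m) × ℕ) :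
    ((blockL m b : List _) : Multiset _).count p = if b p.1 = p.2 then 1 else 0 := by
  have h1 : ((blockL m b : List _) : Multiset _)
      = Finset.univ.val.map (fun s => (s, b s)) := rfl
  rw [h1, count_map_univ]
  by_cases hp : b p.1 = p.2
  · rw [if_pos hp]
    rw [show (Finset.univ.filter fun s' => (s', b s') = p) = {p.1} from ?_,
      Finset.card_singleton]
    ext s'
    simp only [Finset.mem_filter, Finset.mem_univ, true_and, Finset.mem_singleton,
      Prod.ext_iff]
    constructor
    · rintro ⟨h1, _⟩; exact h1
    · rintro rfl; exact ⟨rfl, hp⟩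
  · rw [if_neg hp, Finset.card_eq_zero.mpr]
    ext s'
    simp only [Finset.mem_filter, Finset.mem_univ, true_and, Finset.notMem_empty,
      iff_false, Prod.ext_iff, not_and]
    rintro rfl
    exact hp
  
lemma count_YL (m : ℕ) {k : ℕ} (β : Fin k → Fin (2*m) → ℕ) (p : Fin (2*m) × ℕ) :
    ((YL m β : List _) : Multiset _).count p
      = (Finset.univ.filter fun α : Fin k => β α p.1 = p.2).card := by
  rw [YL_multiset, Multiset.count_sum']
  simp only [count_blockL]
  rw [Finset.card_filter]

lemma sort_map_val (S : Finset ℕ) :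
    (Finset.univ.val.map ((S.sort (·≤·)).get) : Multiset ℕ) = S.val := by
  have h1 : (Finset.univ.val.map ((S.sort (·≤·)).get) : Multiset ℕ)
      = (((List.finRange (S.sort (·≤·)).length).map ((S.sort (·≤·)).get) : List ℕ)
          : Multiset ℕ) := rfl
  rw [h1, ← List.ofFn_eq_map, List.ofFn_get, Finset.sort_eq]

lemma X_side (m : ℕ) (S : Finset ℕ) (s : Fin (2*m)) :
    (Finset.univ.val.map
        (fun α : Fin (S.sort (·≤·)).length => can m ((S.sort (·≤·)).get α) s)
      : Multiset ℕ) = S.val.map (fcol m s) := by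
  rw [show (fun α : Fin (S.sort (·≤·)).length => can m ((S.sort (·≤·)).get α) s)
      = (fcol m s) ∘ ((S.sort (·≤·)).get) from rfl, ← Multiset.map_map, sort_map_val]

lemma X_nodup (m : ℕ) (hm : 1 ≤ m) (S : Finset ℕ) (hS : Adm m S) :
    (YL m (fun α : Fin (S.sort (·≤·)).length => can m ((S.sort (·≤·)).get α))).Nodup := by
  rw [YL, List.nodup_flatMap]
  constructor
  · intro x _
    exact (List.nodup_finRange _).map (fun a a' h => congrArg Prod.fst h)
  · have hpair : ∀ {a b : Fin (S.sort (·≤·)).length}, a ≠ b →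
        (Function.onFun List.Disjoint fun α =>
          blockL m (can m ((S.sort (·≤·)).get α))) a b := by
      intro a b hab
      intro p hpa hpb
      simp only [blockL, List.mem_map] at hpa hpb
      obtain ⟨s, hs1, rfl⟩ := hpa
      obtain ⟨s', hs2, hEq⟩ := hpb
      have hs : s' = s := congrArg Prod.fst hEq
      have hfe : can m ((S.sort (·≤·)).get b) s = can m ((S.sort (·≤·)).get a) s := by
        have h2 := congrArg Prod.snd hEq
        rw [hs] at h2
        exact h2
      have hmema : (S.sort (·≤·)).get a ∈ S := Finset.mem_sort _ |>.mp
        ((S.sort (·≤·)).get_mem a)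
      have hmemb : (S.sort (·≤·)).get b ∈ S := Finset.mem_sort _ |>.mp
        ((S.sort (·≤·)).get_mem b)
      have hne : (S.sort (·≤·)).get a ≠ (S.sort (·≤·)).get b := by
        intro hc
        exact hab (List.nodup_iff_injective_get.mp (S.sort_nodup (·≤·)) hc)
      rcases lt_or_gt_of_ne hne with hlt | hgt
      · exact absurd hfe.symm
          (Nat.ne_of_lt (fcol_gap hm s (Adm_gap hS hmema hmemb hlt)))
      · exact absurd hfe
          (Nat.ne_of_lt (fcol_gap hm s (Adm_gap hS hmemb hmema hgt)))
    exact (List.nodup_finRange _).imp hpair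

lemma sum_over_sort (S : Finset ℕ) (g : ℕ → ℕ) :
    ∑ α : Fin (S.sort (·≤·)).length, g ((S.sort (·≤·)).get α) = ∑ i ∈ S, g i := by
  rw [Finset.sum_eq_multiset_sum, Finset.sum_eq_multiset_sum, ← sort_map_val S,
    Multiset.map_map]
  rfl

end S5

/-- The products `ξ̃_{i_1} ξ̃_{i_2} ⋯ ξ̃_{i_k}` over admissible increasing sequences
(with gaps at least `2m`) are ℂ-linearly independent. -/
theorem statement5 (m : ℕ) (hm : 1 ≤ m) :
    LinearIndependent ℂ
      (fun S : {S : Finset ℕ // Adm m S} =>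
        ((S.1.sort (· ≤ ·)).map (xitilde m)).prod) := by
  classical
  open S5 in
  rw [linearIndependent_iff]
  intro l hl
  by_contra hne0
  have hsupp : l.support.Nonempty := Finsupp.support_nonempty_iff.mpr hne0
  obtain ⟨S₀, hS₀mem, hS₀min⟩ :=
    Finset.exists_min_image l.support (fun S => ∑ i ∈ S.1, 2^i) hsupp
  set k₀ := (S₀.1.sort (·≤·)).length with hk₀
  set u₀ : Fin k₀ → ℕ := (S₀.1.sort (·≤·)).get with hu₀
  set X : List (Fin (2*m) × ℕ) := YL m (fun α : Fin k₀ => can m (u₀ α)) with hXdef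
  have hXnodup : X.Nodup := X_nodup m hm S₀.1 S₀.2
  have hXlen : X.length = k₀ * (2*m) := length_YL m _
  -- expansion of each product
  have hexp : ∀ S : {S : Finset ℕ // Adm m S},
      ((S.1.sort (· ≤ ·)).map (xitilde m)).prod
        = ∑ β ∈ Fintype.piFinset
            (fun α : Fin (S.1.sort (·≤·)).length => Bset m ((S.1.sort (·≤·)).get α)),
            wedge m (YL m β) := by
    intro S
    have h := expand m (S.1.sort (·≤·)).length (S.1.sort (·≤·)).get
    rw [List.ofFn_get] at h
    exact h
  -- central claim
  have central : ∀ (S : {S : Finset ℕ // Adm m S}), S ∈ l.support →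
      ∀ β ∈ Fintype.piFinset
          (fun α : Fin (S.1.sort (·≤·)).length => Bset m ((S.1.sort (·≤·)).get α)),
        phi m X (wedge m (YL m β)) ≠ 0 →
        S = S₀ ∧ (∀ α s, β α s = can m ((S.1.sort (·≤·)).get α) s) := by
    intro S hmem β hβ hphi
    have hlen : (YL m β).length = X.length := by
      by_contra h0
      exact hphi (phi_wedge_ne m X _ h0)
    have hk : (S.1.sort (·≤·)).length = k₀ := by
      rw [length_YL, hXlen] at hlen
      exact Nat.eq_of_mul_eq_mul_right (by omega) hlen
    have hperm : (YL m β).Perm X := by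
      by_contra hnp
      exact hphi (phi_wedge_nonperm m X _ hXnodup hlen hnp)
    have hmscoe : (↑(YL m β) : Multiset (Fin (2*m) × ℕ)) = (↑X : Multiset (Fin (2*m) × ℕ)) :=
      Multiset.coe_eq_coe.mpr hperm
    have hms : ∀ s, (Finset.univ.val.map fun α : Fin (S.1.sort (·≤·)).length => β α s)
        = S₀.1.val.map (fcol m s) := by
      intro s
      refine Multiset.ext.mpr fun j => ?_
      calc Multiset.count j
            (Finset.univ.val.map fun α : Fin (S.1.sort (·≤·)).length => β α s)
          = (Finset.univ.filter
              fun α : Fin (S.1.sort (·≤·)).length => β α s = j).card := count_map_univ _ _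
        _ = ((YL m β : List _) : Multiset _).count (s, j) := (count_YL m β (s,j)).symm
        _ = (X : Multiset _).count (s, j) := by rw [hmscoe]
        _ = (Finset.univ.filter fun α : Fin k₀ => can m (u₀ α) s = j).card :=
            count_YL m _ (s,j)
        _ = Multiset.count j (Finset.univ.val.map fun α : Fin k₀ => can m (u₀ α) s) :=
            (count_map_univ _ _).symm
        _ = Multiset.count j (S₀.1.val.map (fcol m s)) := by rw [X_side]
    have hu : StrictMono (S.1.sort (·≤·)).get := (Finset.sortedLT_sort S.1).strictMono_get
    have hsums : ∀ α, ∑ s, β α s = (S.1.sort (·≤·)).get α := by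
      intro α
      have h1 := Fintype.mem_piFinset.mp hβ α
      exact (Finset.mem_filter.mp h1).2
    have hcard : S₀.1.card = (S.1.sort (·≤·)).length := by
      rw [hk, hk₀, Finset.length_sort]
    obtain ⟨hle, heqc⟩ := key hm (S.1.sort (·≤·)).length S₀.1 S₀.2 hcard
      (S.1.sort (·≤·)).get hu β hsums hms
    have hnval : ∑ α : Fin (S.1.sort (·≤·)).length, 2^((S.1.sort (·≤·)).get α)
        = ∑ i ∈ S.1, 2^i := sum_over_sort S.1 (fun i => 2^i)
    have hmin := hS₀min S hmem
    obtain ⟨hmemS₀, hcanon⟩ := heqc (by omega)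
    have hsub : S.1 ⊆ S₀.1 := by
      intro i hi
      obtain ⟨α, hα⟩ := List.mem_iff_get.mp ((S.1.mem_sort (·≤·)).mpr hi)
      exact hα ▸ hmemS₀ α
    have hSeq : S.1 = S₀.1 := by
      apply Finset.eq_of_subset_of_card_le hsub
      rw [hcard, Finset.length_sort]
    exact ⟨Subtype.ext hSeq, fun α s => hcanon α s⟩
  -- term values
  have hPSne : ∀ S ∈ l.support, S ≠ S₀ →
      phi m X (((S.1.sort (· ≤ ·)).map (xitilde m)).prod) = 0 := by
    intro S hmem hne
    rw [hexp S, map_sum]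
    apply Finset.sum_eq_zero
    intro β hβ
    by_contra h0
    exact hne (central S hmem β hβ h0).1
  have hPS0 : phi m X (((S₀.1.sort (· ≤ ·)).map (xitilde m)).prod) = 1 := by
    rw [hexp S₀, map_sum]
    have hcanmem : (fun α : Fin k₀ => can m (u₀ α)) ∈ Fintype.piFinset
        (fun α : Fin k₀ => Bset m (u₀ α)) := by
      rw [Fintype.mem_piFinset]
      intro α
      rw [Bset, Finset.mem_filter]
      constructor
      · rw [Fintype.mem_piFinset]
        intro s
        rw [Finset.mem_range]
        exact Nat.lt_succ_of_le (fcol_le hm s (u₀ α))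
      · exact sum_fcol hm (u₀ α)
    rw [Finset.sum_eq_single_of_mem _ hcanmem]
    · exact phi_self m X hXnodup
    · intro β hβ hne
      by_contra h0
      obtain ⟨-, hcanon⟩ := central S₀ hS₀mem β hβ h0
      exact hne (funext fun α => funext fun s => hcanon α s)
  have happ : ∑ S ∈ l.support,
      l S * phi m X (((S.1.sort (· ≤ ·)).map (xitilde m)).prod) = 0 := by
    have h1 := congrArg (phi m X) hl
    rw [map_zero, Finsupp.linearCombination_apply, Finsupp.sum, map_sum] at h1
    simpa [smul_eq_mul] using h1
  rw [Finset.sum_eq_single_of_mem S₀ hS₀mem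
    (fun S hS hne => by rw [hPSne S hS hne, mul_zero]), hPS0, mul_one] at happ
  exact (Finsupp.mem_support_iff.mp hS₀mem) happ
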